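/- Let S be a finite set, d a positive integer, and let ψ : S → ℝ^d be a random map such that the d·|S| coordinates {ψ(s)_i : s ∈ S, 1 ≤ i ≤ d} are independent and each is uniformly distributed on {−1/√d, +1/√d}. For arbitrary subsets A, B ⊆ S, define the random vectors a = Σ_{x ∈ A} ψ(x) and b = Σ_{y ∈ B} ψ(y). Then the dot product a · b is an unbiased estimator of the intersection size: E[a · b] = |A ∩ B|. -/

import Mathlib

open MeasureTheory ProbabilityTheory

/-- The dot product of DotHash sketches is an unbiased estimator of the
intersection size: `E[a · b] = |A ∩ B|`. -/
theorem dothash_expected_dot_eq_inter_card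
    {Ω : Type*} [MeasurableSpace Ω] (μ : Measure Ω) [IsProbabilityMeasure μ]
    {S : Type*} [Fintype S] [DecidableEq S]
    (d : ℕ) (hd : 0 < d)
    (ψ : Ω → S → Fin d → ℝ)
    (hmeas : ∀ (s : S) (i : Fin d), Measurable fun ω => ψ ω s i)
    (hindep : iIndepFun (fun (p : S × Fin d) ω => ψ ω p.1 p.2) μ)
    (hunif : ∀ (s : S) (i : Fin d),
      μ {ω | ψ ω s i = 1 / Real.sqrt d} = 1/2 ∧
      μ {ω | ψ ω s i = -(1 / Real.sqrt d)} = 1/2)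
    (A B : Finset S) :
    ∫ ω, ∑ i, (∑ x ∈ A, ψ ω x i) * (∑ y ∈ B, ψ ω y i) ∂μ
      = ((A ∩ B).card : ℝ) := by
  classical
  set c : ℝ := 1 / Real.sqrt d with hc
  have hdpos : (0:ℝ) < d := by exact_mod_cast hd
  have hsqrt : 0 < Real.sqrt d := Real.sqrt_pos.2 hdpos
  have hcpos : 0 < c := by positivity
  have hcc : c * c = 1 / d := by
    rw [hc, div_mul_div_comm, one_mul, Real.mul_self_sqrt hdpos.le]
  have hcne : c ≠ -c := by intro h; nlinarith
  -- a.e. the variable takes values c or -c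
  have hae : ∀ s i, ∀ᵐ ω ∂μ, ψ ω s i = c ∨ ψ ω s i = -c := by
    intro s i
    obtain ⟨h1, h2⟩ := hunif s i
    have hA : MeasurableSet {ω | ψ ω s i = c} := (hmeas s i) (measurableSet_singleton c)
    have hB : MeasurableSet {ω | ψ ω s i = -c} := (hmeas s i) (measurableSet_singleton (-c))
    have hdisj : Disjoint {ω | ψ ω s i = c} {ω | ψ ω s i = -c} := by
      rw [Set.disjoint_left]
      intro ω hωA hωB
      exact hcne (hωA ▸ hωB)
    have hU : μ ({ω | ψ ω s i = c} ∪ {ω | ψ ω s i = -c}) = 1 := by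
      rw [measure_union hdisj hB, h1, h2, ENNReal.div_add_div_same,
        one_add_one_eq_two, ENNReal.div_self two_ne_zero ENNReal.ofNat_ne_top]
    have hz : μ ({ω | ψ ω s i = c} ∪ {ω | ψ ω s i = -c})ᶜ = 0 := by
      rw [measure_compl (hA.union hB) (measure_ne_top _ _), hU, measure_univ]
      simp
    have hcompl : {ω | ¬ (ψ ω s i = c ∨ ψ ω s i = -c)}
        = ({ω | ψ ω s i = c} ∪ {ω | ψ ω s i = -c})ᶜ := by
      ext ω; simp [not_or]
    exact ae_iff.2 (hcompl ▸ hz)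
  -- a.e. bound
  have hbd : ∀ s i, ∀ᵐ ω ∂μ, ‖ψ ω s i‖ ≤ c := by
    intro s i
    filter_upwards [hae s i] with ω hω
    rcases hω with h | h <;> rw [h] <;> simp [abs_of_pos hcpos, le_abs_self, hcpos.le]
  -- integrability
  have hint : ∀ s i, Integrable (fun ω => ψ ω s i) μ := by
    intro s i
    exact (integrable_const c).mono' (hmeas s i).aestronglyMeasurable (hbd s i)
  have hintmul : ∀ x y i, Integrable (fun ω => ψ ω x i * ψ ω y i) μ := by
    intro x y i
    refine (integrable_const (c * c)).mono'
      ((hmeas x i).mul (hmeas y i)).aestronglyMeasurable ?_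
    filter_upwards [hbd x i, hbd y i] with ω h1 h2
    calc ‖ψ ω x i * ψ ω y i‖ = ‖ψ ω x i‖ * ‖ψ ω y i‖ := norm_mul _ _
      _ ≤ c * c := mul_le_mul h1 h2 (norm_nonneg _) hcpos.le
  -- mean zero
  have hmean : ∀ s i, ∫ ω, ψ ω s i ∂μ = 0 := by
    intro s i
    obtain ⟨h1, h2⟩ := hunif s i
    have hA : MeasurableSet {ω | ψ ω s i = c} := (hmeas s i) (measurableSet_singleton c)
    have hB : MeasurableSet {ω | ψ ω s i = -c} := (hmeas s i) (measurableSet_singleton (-c))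
    have heq : (fun ω => ψ ω s i)
        =ᵐ[μ] fun ω => Set.indicator {ω | ψ ω s i = c} (fun _ => c) ω
          + Set.indicator {ω | ψ ω s i = -c} (fun _ => -c) ω := by
      filter_upwards [hae s i] with ω hω
      rcases hω with h | h
      · have h2' : ω ∉ {ω | ψ ω s i = -c} := fun hmem => hcne (h ▸ hmem)
        simp [Set.indicator_of_mem (show ω ∈ {ω | ψ ω s i = c} from h),
          Set.indicator_of_notMem h2', h]
      · have h1' : ω ∉ {ω | ψ ω s i = c} := fun hmem => hcne (hmem ▸ h)
        simp [Set.indicator_of_mem (show ω ∈ {ω | ψ ω s i = -c} from h),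
          Set.indicator_of_notMem h1', h]
    rw [integral_congr_ae heq, integral_add
      ((integrable_const c).indicator hA) ((integrable_const (-c)).indicator hB),
      integral_indicator_const _ hA, integral_indicator_const _ hB, measureReal_def,
      measureReal_def, h1, h2]
    simp [ENNReal.toReal_div]
  -- key: expectation of products
  have hkey : ∀ (x y : S) (i : Fin d),
      ∫ ω, ψ ω x i * ψ ω y i ∂μ = if x = y then 1 / (d:ℝ) else 0 := by
    intro x y i
    by_cases hxy : x = y
    · subst hxy
      simp only [if_pos rfl]
      have heq : (fun ω => ψ ω x i * ψ ω x i) =ᵐ[μ] fun _ => 1 / (d:ℝ) := by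
        filter_upwards [hae x i] with ω hω
        rcases hω with h | h <;> rw [h] <;> [exact hcc; (rw [neg_mul_neg]; exact hcc)]
      rw [integral_congr_ae heq]
      simp
    · simp only [if_neg hxy]
      have hne : ((x, i) : S × Fin d) ≠ (y, i) := by simp [Prod.ext_iff, hxy]
      have hIF : IndepFun (fun ω => ψ ω x i) (fun ω => ψ ω y i) μ :=
        hindep.indepFun hne
      have h := hIF.integral_mul_eq_mul_integral (hint x i).aestronglyMeasurable
        (hint y i).aestronglyMeasurable
      rw [show (fun ω => ψ ω x i * ψ ω y i) = (fun ω => ψ ω x i) * (fun ω => ψ ω y i)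
        from rfl, h, hmean x i, hmean y i, mul_zero]
  -- expand and conclude
  have hexp : (fun ω => ∑ i, (∑ x ∈ A, ψ ω x i) * (∑ y ∈ B, ψ ω y i))
      = fun ω => ∑ i, ∑ x ∈ A, ∑ y ∈ B, ψ ω x i * ψ ω y i := by
    funext ω
    refine Finset.sum_congr rfl fun i _ => ?_
    rw [Finset.sum_mul_sum]
  rw [hexp]
  rw [integral_finset_sum _ fun i _ => integrable_finset_sum _ fun x _ =>
    integrable_finset_sum _ fun y _ => hintmul x y i]
  have : ∀ i : Fin d, ∫ ω, ∑ x ∈ A, ∑ y ∈ B, ψ ω x i * ψ ω y i ∂μ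
      = ((A ∩ B).card : ℝ) / d := by
    intro i
    rw [integral_finset_sum _ fun x _ => integrable_finset_sum _ fun y _ => hintmul x y i]
    have : ∀ x ∈ A, ∫ ω, ∑ y ∈ B, ψ ω x i * ψ ω y i ∂μ
        = if x ∈ B then 1 / (d:ℝ) else 0 := by
      intro x _
      rw [integral_finset_sum _ fun y _ => hintmul x y i]
      rw [Finset.sum_congr rfl fun y _ => hkey x y i]
      simp [Finset.sum_ite_eq]
    rw [Finset.sum_congr rfl this]
    rw [Finset.sum_ite_mem, Finset.sum_const]
    simp [div_eq_mul_inv]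
  rw [Finset.sum_congr rfl fun i _ => this i, Finset.sum_const]
  simp [Finset.card_univ]
  field_simp
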